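/- Conversely, if h is a positive integer such that the matrix T_h = [[1, 1/h], [0, 1]] normalises Γ₀(h²), then h divides 24. -/

import Mathlib

lemma aux24 (h : ℕ) (hpos : 0 < h)
    (P : ∀ a : ℕ, Nat.Coprime a h → (h : ℤ) ∣ (a : ℤ) ^ 2 - 1) : h ∣ 24 := by
  rw [Nat.dvd_iff_prime_pow_dvd_dvd]
  intro p j pp hpj
  have pp' : p.Prime := pp
  set k := h.factorization p with hk
  have hjk : j ≤ k := (pp'.pow_dvd_iff_le_factorization hpos.ne').mp hpj
  have hq : p ^ k ∣ 24 := by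
    rcases Nat.eq_zero_or_pos k with hk0 | hk1
    · simp [hk0]
    set s : ℕ := if p = 2 then 3 else 2 with hs
    have hps : ¬ p ∣ s := by
      rcases eq_or_ne p 2 with rfl | hp2
      · simp [hs]
      · simp only [hs, if_neg hp2]
        intro hd
        exact hp2 ((Nat.prime_dvd_prime_iff_eq pp' Nat.prime_two).mp hd)
    have hco : (p ^ k).Coprime (ordCompl[p] h) :=
      (Nat.coprime_ordCompl pp' hpos.ne').pow_left _
    obtain ⟨a, ha1, ha2⟩ := Nat.chineseRemainder hco s 1
    have hpk : p ∣ p ^ k := dvd_pow_self p hk1.ne'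
    have hah : Nat.Coprime a h := by
      rw [← Nat.ordProj_mul_ordCompl_eq_self h p]
      refine Nat.Coprime.mul_right ?_ ?_
      · refine Nat.Coprime.pow_right _ ((pp'.coprime_iff_not_dvd).mpr ?_).symm
        intro hpa
        have h1 : a ≡ s [MOD p] := ha1.of_dvd hpk
        have h2 : (0 : ℕ) ≡ s [MOD p] := (Nat.modEq_zero_iff_dvd.mpr hpa).symm.trans h1
        exact hps (Nat.modEq_zero_iff_dvd.mp h2.symm)
      · exact Nat.coprime_of_mul_modEq_one 1 (by simpa using ha2)
    have hPa : (h : ℤ) ∣ (a : ℤ) ^ 2 - 1 := P a hah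
    have hqh : (p ^ k : ℕ) ∣ h := Nat.ordProj_dvd h p
    have hq1 : ((p ^ k : ℕ) : ℤ) ∣ (a : ℤ) ^ 2 - 1 :=
      dvd_trans (Int.natCast_dvd_natCast.mpr hqh) hPa
    have hq2 : ((p ^ k : ℕ) : ℤ) ∣ (s : ℤ) - a := ha1.dvd
    have hq3 : ((p ^ k : ℕ) : ℤ) ∣ (s : ℤ) ^ 2 - 1 := by
      have : (s : ℤ) ^ 2 - 1 = ((s : ℤ) - a) * ((s : ℤ) + a) + ((a : ℤ) ^ 2 - 1) := by ring
      rw [this]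
      exact dvd_add (hq2.mul_right _) hq1
    rcases eq_or_ne p 2 with rfl | hp2
    · have h8 : ((2 ^ k : ℕ) : ℤ) ∣ (8 : ℤ) := by
        have : ((3 : ℕ) : ℤ) ^ 2 - 1 = 8 := by norm_num
        simpa [hs, this] using hq3
      have : (2 : ℕ) ^ k ∣ 8 := by exact_mod_cast h8
      exact this.trans (by norm_num)
    · have h3 : ((p ^ k : ℕ) : ℤ) ∣ (3 : ℤ) := by
        have : ((2 : ℕ) : ℤ) ^ 2 - 1 = 3 := by norm_num
        simpa [hs, hp2, this] using hq3
      have : p ^ k ∣ 3 := by exact_mod_cast h3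
      exact this.trans (by norm_num)
  exact (pow_dvd_pow p hjk).trans hq

/-- Conversely: if `h` is a positive integer such that `T_h = [[1, 1/h], [0, 1]]`
normalises `Γ₀(h²)` (i.e. conjugation by `T_h` sends every integer matrix of
determinant 1 with lower-left entry divisible by `h²` to another such matrix),
then `h` divides `24`. -/
theorem dvd_24_of_Th_normalises (h : ℕ) (hpos : 0 < h)
    (hnorm : ∀ γ : Matrix (Fin 2) (Fin 2) ℤ, γ.det = 1 → ((h : ℤ)) ^ 2 ∣ γ 1 0 →
      ∃ δ : Matrix (Fin 2) (Fin 2) ℤ, δ.det = 1 ∧ ((h : ℤ)) ^ 2 ∣ δ 1 0 ∧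
        (!![1, 1 / (h : ℚ); 0, 1]) * γ.map (Int.cast : ℤ → ℚ) * (!![1, 1 / (h : ℚ); 0, 1])⁻¹
          = δ.map (Int.cast : ℤ → ℚ)) :
    h ∣ 24 := by
  have hh : (h : ℚ) ≠ 0 := Nat.cast_ne_zero.mpr hpos.ne'
  have hTinv : (!![1, 1 / (h : ℚ); 0, 1])⁻¹ = !![1, -(1 / (h : ℚ)); 0, 1] := by
    apply Matrix.inv_eq_right_inv
    rw [Matrix.mul_fin_two, Matrix.one_fin_two]
    norm_num
  apply aux24 h hpos
  intro a hco
  have hco2 : IsCoprime (a : ℤ) ((h : ℤ) ^ 2) := by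
    rw [show ((h:ℤ))^2 = ((h^2 : ℕ) : ℤ) by push_cast; ring]
    exact Nat.isCoprime_iff_coprime.mpr (hco.pow_right 2)
  obtain ⟨u, v, huv⟩ := hco2
  set γ : Matrix (Fin 2) (Fin 2) ℤ := !![(a : ℤ), -v; (h : ℤ) ^ 2, u] with hγ
  have hdet : γ.det = 1 := by
    rw [hγ, Matrix.det_fin_two_of]
    linear_combination huv
  obtain ⟨δ, hδdet, hδdvd, heq⟩ := hnorm γ hdet (by simp [hγ])
  rw [hTinv] at heq
  have heq01 := congrFun (congrFun heq 0) 1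
  simp [hγ, Matrix.mul_apply, Matrix.vecMul, dotProduct, Fin.sum_univ_two, Matrix.map_apply] at heq01
  have keyQ : ((u : ℚ) - (a : ℚ)) = (h : ℚ) * (((δ 0 1 : ℤ) : ℚ) + (v : ℚ) + 1) := by
    field_simp at heq01
    have h2 : ((u : ℚ) - (a : ℚ)) * (h : ℚ) ^ 2
        = ((h : ℚ) * (((δ 0 1 : ℤ) : ℚ) + (v : ℚ) + 1)) * (h : ℚ) ^ 2 := by
      linear_combination (h : ℚ) ^ 2 * heq01
    exact mul_right_cancel₀ (pow_ne_zero 2 hh) h2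
  have keyZ : (u - (a : ℤ)) = (h : ℤ) * (δ 0 1 + v + 1) := by exact_mod_cast keyQ
  refine ⟨-(a : ℤ) * (δ 0 1 + v + 1) - v * h, ?_⟩
  linear_combination (-(a : ℤ)) * keyZ + huv
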